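/- Let B⟨X⟩ be as above and define the B-symmetrization operator C : B⟨X⟩ → B⟨X⟩ by C[p] = (1⊗X) # δ_{X:B}[p], so that on monomials C[b₀Xb₁⋯Xb_n] = Σ_{i=0}^{n-1} b_{i+1}X⋯Xb_n b₀X⋯Xb_i X. Then ker(C) = B + [B⟨X⟩, B⟨X⟩]. -/

import Mathlib

open scoped TensorProduct Pointwise

noncomputable section

/-- `(A, ι, X)` is the free product `B *_ℂ ℂ⟨X⟩`, characterized by its universal
property: every algebra map `φ : B → C` together with a choice of element `x ∈ C`
extends uniquely to an algebra map `A → C` sending `X` to `x`. -/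
def IsFreeProduct {B A : Type} [Ring B] [Algebra ℂ B] [Ring A] [Algebra ℂ A]
    (ι : B →ₐ[ℂ] A) (X : A) : Prop :=
  ∀ (C : Type) [Ring C] [Algebra ℂ C], ∀ (φ : B →ₐ[ℂ] C) (x : C),
    ∃! ψ : A →ₐ[ℂ] C, ψ.comp ι = φ ∧ ψ X = x

/-- the monomial `b₀ X b₁ ⋯ X bₙ`, where `bs = [b₁, …, bₙ]`. -/
def mono {B A : Type} [Ring B] [Algebra ℂ B] [Ring A] [Algebra ℂ A]
    (ι : B →ₐ[ℂ] A) (X : A) (b0 : B) (bs : List B) : A :=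
  ι b0 * (bs.map (fun b => X * ι b)).prod

/-- the cyclic derivative `δ = μ ∘ σ ∘ ∂` associated with a difference quotient `D`. -/
def cyclicDer {A : Type} [Ring A] [Algebra ℂ A] (D : A →ₗ[ℂ] A ⊗[ℂ] A) : A →ₗ[ℂ] A :=
  (LinearMap.mul' ℂ A) ∘ₗ (TensorProduct.comm ℂ A A).toLinearMap ∘ₗ D

/-- the operation `u # b`, determined by `(a ⊗ c) # b = a b c`. -/
def sharp {A : Type} [Ring A] [Algebra ℂ A] (u : A ⊗[ℂ] A) (b : A) : A :=
  LinearMap.mul' ℂ A (u * (b ⊗ₜ[ℂ] (1 : A)))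

/-- the divergence operator `∂* : u ↦ u # X`, i.e. `(a ⊗ c) ↦ a X c`. -/
def divg {A : Type} [Ring A] [Algebra ℂ A] (X : A) : A ⊗[ℂ] A →ₗ[ℂ] A :=
  (LinearMap.mul' ℂ A) ∘ₗ (LinearMap.mulRight ℂ (X ⊗ₜ[ℂ] (1 : A)))

/-- the number operator `N = ∂* ∘ ∂`. -/
def numOp {A : Type} [Ring A] [Algebra ℂ A] (X : A) (D : A →ₗ[ℂ] A ⊗[ℂ] A) :
    A →ₗ[ℂ] A :=
  divg X ∘ₗ D

section Helpers
variable {A : Type} [Ring A] [Algebra ℂ A]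

lemma mul'_one_right (u : A ⊗[ℂ] A) (q : A) :
    LinearMap.mul' ℂ A (u * ((1:A) ⊗ₜ[ℂ] q)) = LinearMap.mul' ℂ A u * q := by
  induction u using TensorProduct.induction_on with
  | zero => simp
  | tmul a c => simp [Algebra.TensorProduct.tmul_mul_tmul, mul_assoc]
  | add x y hx hy => simp [add_mul, hx, hy]

lemma mul'_one_left (p : A) (u : A ⊗[ℂ] A) :
    LinearMap.mul' ℂ A ((p ⊗ₜ[ℂ] (1:A)) * u) = p * LinearMap.mul' ℂ A u := by
  induction u using TensorProduct.induction_on with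
  | zero => simp
  | tmul a c => simp [Algebra.TensorProduct.tmul_mul_tmul, mul_assoc]
  | add x y hx hy => simp [mul_add, hx, hy]

lemma comm_swap (u : A ⊗[ℂ] A) (q : A) :
    LinearMap.mul' ℂ A ((TensorProduct.comm ℂ A A) (u * ((1:A) ⊗ₜ[ℂ] q))) =
      LinearMap.mul' ℂ A ((TensorProduct.comm ℂ A A) ((q ⊗ₜ[ℂ] (1:A)) * u)) := by
  induction u using TensorProduct.induction_on with
  | zero => simp
  | tmul a c => simp [Algebra.TensorProduct.tmul_mul_tmul, mul_assoc]
  | add x y hx hy => simp [mul_add, add_mul, hx, hy]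

lemma divg_left (X p : A) (u : A ⊗[ℂ] A) :
    divg X ((p ⊗ₜ[ℂ] (1:A)) * u) = p * divg X u := by
  simp only [divg, LinearMap.comp_apply, LinearMap.mulRight_apply, mul_assoc]
  exact mul'_one_left p _

lemma divg_right (X q : A) (u : A ⊗[ℂ] A) :
    divg X (u * ((1:A) ⊗ₜ[ℂ] q)) = divg X u * q := by
  simp only [divg, LinearMap.comp_apply, LinearMap.mulRight_apply]
  rw [mul_assoc, show ((1:A) ⊗ₜ[ℂ] q) * (X ⊗ₜ[ℂ] (1:A)) = (X ⊗ₜ[ℂ] (1:A)) * ((1:A) ⊗ₜ[ℂ] q) by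
    simp [Algebra.TensorProduct.tmul_mul_tmul], ← mul_assoc, mul'_one_right]

end Helpers

section Gen
variable {B A : Type} [Ring B] [Algebra ℂ B] [Ring A] [Algebra ℂ A]
  (ι : B →ₐ[ℂ] A) (X : A)

lemma mono_nil (b0 : B) : mono ι X b0 [] = ι b0 := by simp [mono]

lemma mono_cons (b0 b : B) (bs : List B) :
    mono ι X b0 (b :: bs) = ι b0 * (X * mono ι X b bs) := by
  simp [mono, mul_assoc]

lemma mono_mul : ∀ (bs : List B) (b0 c0 : B) (cs : List B),
    ∃ d0 ds, mono ι X b0 bs * mono ι X c0 cs = mono ι X d0 ds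
  | [] , b0, c0, cs => ⟨b0 * c0, cs, by simp [mono, mul_assoc]⟩
  | b :: bs, b0, c0, cs => by
    obtain ⟨d0, ds, h⟩ := mono_mul bs b c0 cs
    exact ⟨b0, d0 :: ds, by rw [mono_cons, mono_cons, mul_assoc, mul_assoc, h]⟩

lemma adjoin_top (hfree : IsFreeProduct ι X) :
    Algebra.adjoin ℂ (Set.range ι ∪ {X}) = ⊤ := by
  set S := Algebra.adjoin ℂ (Set.range ι ∪ {X}) with hS
  have hιS : ∀ b : B, ι b ∈ S := fun b =>
    Algebra.subset_adjoin (Or.inl (Set.mem_range_self b))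
  have hXS : X ∈ S := Algebra.subset_adjoin (Or.inr rfl)
  obtain ⟨ψ, ⟨hψι, hψX⟩, -⟩ := hfree S (ι.codRestrict S hιS) ⟨X, hXS⟩
  obtain ⟨χ, -, hu⟩ := hfree A ι X
  have h1 : S.val.comp ψ = χ := by
    apply hu
    constructor
    · ext b
      have := congrArg (fun f => (f b : A)) hψι
      simpa using this
    · simpa using congrArg (S.val) hψX
  have h2 : AlgHom.id ℂ A = χ := by
    apply hu
    exact ⟨AlgHom.ext fun b => rfl, rfl⟩
  have hsurj : ∀ a : A, a ∈ S := by
    intro a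
    have : S.val (ψ a) = a := by
      rw [show S.val (ψ a) = (S.val.comp ψ) a from rfl, h1, ← h2]; rfl
    exact this ▸ (ψ a).2
  exact top_unique fun a _ => hsurj a

lemma span_mono_top (hfree : IsFreeProduct ι X) :
    Submodule.span ℂ (Set.range (fun p : B × List B => mono ι X p.1 p.2)) = ⊤ := by
  set s := Set.range (fun p : B × List B => mono ι X p.1 p.2) with hs
  apply top_unique
  intro a ha0
  clear ha0
  have ha : a ∈ Algebra.adjoin ℂ (Set.range ι ∪ {X}) := by
    rw [adjoin_top ι X hfree]; trivial
  induction ha using Algebra.adjoin_induction with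
  | mem x hx =>
    rcases hx with ⟨b, rfl⟩ | rfl
    · exact Submodule.subset_span ⟨(b, []), by simp [mono]⟩
    · exact Submodule.subset_span ⟨(1, [1]), by simp [mono]⟩
  | algebraMap r =>
    rw [Algebra.algebraMap_eq_smul_one]
    exact Submodule.smul_mem _ r (Submodule.subset_span ⟨(1, []), by simp [mono]⟩)
  | add x y hx hy hx' hy' => exact Submodule.add_mem _ hx' hy'
  | mul x y hx hy hx' hy' =>
    have hss : s * s ⊆ s := by
      rintro - ⟨-, ⟨⟨b0, bs⟩, rfl⟩, -, ⟨⟨c0, cs⟩, rfl⟩, rfl⟩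
      obtain ⟨d0, ds, h⟩ := mono_mul ι X bs b0 c0 cs
      exact ⟨(d0, ds), h.symm⟩
    have hle : Submodule.span ℂ s * Submodule.span ℂ s ≤ Submodule.span ℂ s := by
      rw [Submodule.span_mul_span]
      exact Submodule.span_mono hss
    exact hle (Submodule.mul_mem_mul hx' hy')

end Gen

/-- The `B`-symmetrization operator `C : p ↦ (1⊗X) # δ_{X:B}[p] = δ_{X:B}[p]·X` has kernel
`B + [B⟨X⟩, B⟨X⟩]`. -/
theorem ker_symmetrization_eq
    {B A : Type} [Ring B] [Algebra ℂ B] [Ring A] [Algebra ℂ A]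
    (ι : B →ₐ[ℂ] A) (X : A) (hfree : IsFreeProduct ι X)
    (D : A →ₗ[ℂ] A ⊗[ℂ] A)
    (hD : ∀ p q : A, D (p * q) = (p ⊗ₜ[ℂ] (1 : A)) * D q + D p * ((1 : A) ⊗ₜ[ℂ] q))
    (hDX : D X = (1 : A) ⊗ₜ[ℂ] (1 : A))
    (hDB : ∀ b : B, D (ι b) = 0) :
    LinearMap.ker ((LinearMap.mulRight ℂ X) ∘ₗ cyclicDer D) =
      LinearMap.range ι.toLinearMap ⊔
        Submodule.span ℂ {x : A | ∃ p q : A, x = p * q - q * p} := by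
  set Cop : A →ₗ[ℂ] A := (LinearMap.mulRight ℂ X) ∘ₗ cyclicDer D with hCop
  set N : A →ₗ[ℂ] A := numOp X D with hNdef
  set spanS : Submodule ℂ A := Submodule.span ℂ {x : A | ∃ p q : A, x = p * q - q * p}
    with hspanS
  set M : Submodule ℂ A := LinearMap.range ι.toLinearMap ⊔ spanS with hM
  -- basic evaluation lemmas
  have hCopApply : ∀ p : A, Cop p =
      LinearMap.mul' ℂ A ((TensorProduct.comm ℂ A A) (D p)) * X := fun p => rfl
  have hNApply : ∀ p : A, N p = divg X (D p) := fun p => rfl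
  -- symmetry of the cyclic derivative
  have hδkey : ∀ p q : A, cyclicDer D (p * q) =
      LinearMap.mul' ℂ A ((TensorProduct.comm ℂ A A) ((p ⊗ₜ[ℂ] (1:A)) * D q)) +
      LinearMap.mul' ℂ A ((TensorProduct.comm ℂ A A) ((q ⊗ₜ[ℂ] (1:A)) * D p)) := by
    intro p q
    have : cyclicDer D (p * q) =
        LinearMap.mul' ℂ A ((TensorProduct.comm ℂ A A) (D (p * q))) := rfl
    rw [this, hD, map_add, map_add, comm_swap]
  have hδsym : ∀ p q : A, cyclicDer D (p * q) = cyclicDer D (q * p) := by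
    intro p q; rw [hδkey, hδkey, add_comm]
  -- derivation property of the number operator
  have hNder : ∀ p q : A, N (p * q) = p * N q + N p * q := by
    intro p q
    rw [hNApply, hNApply, hNApply, hD, map_add, divg_left, divg_right]
  have hNX : N X = X := by
    rw [hNApply, hDX]
    simp [divg, Algebra.TensorProduct.tmul_mul_tmul]
  have hNB : ∀ b : B, N (ι b) = 0 := by
    intro b; rw [hNApply, hDB]; simp
  -- N on monomials
  have hNmono : ∀ (bs : List B) (b0 : B),
      N (mono ι X b0 bs) = ((bs.length : ℂ)) • mono ι X b0 bs := by
    intro bs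
    induction bs with
    | nil => intro b0; rw [mono_nil, hNB]; simp
    | cons b bs ih =>
      intro b0
      rw [mono_cons, hNder, hNB b0, zero_mul, add_zero, hNder, hNX, ih b]
      simp only [List.length_cons, Nat.cast_add, Nat.cast_one, add_smul, one_smul,
        mul_smul_comm, mul_add]
  -- Cop and N agree modulo commutators
  have hCN : ∀ u : A ⊗[ℂ] A,
      LinearMap.mul' ℂ A ((TensorProduct.comm ℂ A A) u) * X - divg X u ∈ spanS := by
    intro u
    induction u using TensorProduct.induction_on with
    | zero => simp
    | tmul a c =>
      have h : LinearMap.mul' ℂ A ((TensorProduct.comm ℂ A A) (a ⊗ₜ[ℂ] c)) * X -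
          divg X (a ⊗ₜ[ℂ] c) = c * (a * X) - (a * X) * c := by
        simp [divg, Algebra.TensorProduct.tmul_mul_tmul, mul_assoc]
      rw [h]
      exact Submodule.subset_span ⟨c, a * X, rfl⟩
    | add x y hx hy =>
      have h : LinearMap.mul' ℂ A ((TensorProduct.comm ℂ A A) (x + y)) * X - divg X (x + y)
          = (LinearMap.mul' ℂ A ((TensorProduct.comm ℂ A A) x) * X - divg X x) +
            (LinearMap.mul' ℂ A ((TensorProduct.comm ℂ A A) y) * X - divg X y) := by
        simp only [map_add, add_mul]; abel
      rw [h]; exact Submodule.add_mem _ hx hy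
  have hCopN : ∀ p : A, Cop p - N p ∈ spanS := by
    intro p; rw [hCopApply, hNApply]; exact hCN (D p)
  -- Cop vanishes on M
  have hCopB : ∀ b : B, Cop (ι b) = 0 := by
    intro b
    rw [hCopApply, hDB]
    simp
  have hCopS : ∀ x ∈ spanS, Cop x = 0 := by
    intro x hx
    induction hx using Submodule.span_induction with
    | mem x hx =>
      obtain ⟨p, q, rfl⟩ := hx
      rw [map_sub, hCop]
      simp only [LinearMap.comp_apply, LinearMap.mulRight_apply]
      rw [hδsym]
      simp
    | zero => simp
    | add x y hx hy hx' hy' => rw [map_add, hx', hy', add_zero]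
    | smul c x hx hx' => rw [map_smul, hx', smul_zero]
  -- N preserves spanS
  have hNS : ∀ x ∈ spanS, N x ∈ spanS := by
    intro x hx
    induction hx using Submodule.span_induction with
    | mem x hx =>
      obtain ⟨p, q, rfl⟩ := hx
      have h : N (p * q - q * p) =
          (p * N q - N q * p) + (N p * q - q * N p) := by
        rw [map_sub, hNder, hNder]; abel
      rw [h]
      exact Submodule.add_mem _ (Submodule.subset_span ⟨p, N q, rfl⟩)
        (Submodule.subset_span ⟨N p, q, rfl⟩)
    | zero => simp
    | add x y hx hy hx' hy' => rw [map_add]; exact Submodule.add_mem _ hx' hy'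
    | smul c x hx hx' => rw [map_smul]; exact Submodule.smul_mem _ c hx'
  -- N preserves M
  have hNM : ∀ x ∈ M, N x ∈ M := by
    intro x hx
    rw [hM] at hx
    rcases Submodule.mem_sup.mp hx with ⟨y, hy, z, hz, rfl⟩
    obtain ⟨b, rfl⟩ := hy
    rw [map_add]
    have h0 : N (ι.toLinearMap b) = 0 := hNB b
    rw [h0, zero_add]
    exact Submodule.mem_sup_right (hNS z hz)
  apply le_antisymm
  · -- hard direction : ker Cop ≤ M
    intro p hp
    have hCop0 : Cop p = 0 := LinearMap.mem_ker.mp hp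
    have hNpS : N p ∈ spanS := by
      have h := hCopN p
      rw [hCop0, zero_sub] at h
      exact neg_mem_iff.mp h
    have hNpM : N p ∈ M := Submodule.mem_sup_right hNpS
    -- pass to the quotient
    set Nbar : (A ⧸ M) →ₗ[ℂ] (A ⧸ M) := M.mapQ M N (fun x hx => hNM x hx) with hNbar
    have hNbarmk : ∀ a : A, Nbar (M.mkQ a) = M.mkQ (N a) := by
      intro a
      simp [hNbar, Submodule.mapQ_apply, Submodule.mkQ_apply]
    have hQtop : ∀ y : A ⧸ M,
        y ∈ ⨆ (μ : ℂ) (_ : μ ≠ (0:ℂ)), Module.End.eigenspace Nbar μ := by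
      intro y
      obtain ⟨a, rfl⟩ := Submodule.mkQ_surjective M y
      have ha : a ∈ Submodule.span ℂ
          (Set.range (fun p : B × List B => mono ι X p.1 p.2)) := by
        rw [span_mono_top ι X hfree]; trivial
      induction ha using Submodule.span_induction with
      | mem x hx =>
        obtain ⟨⟨b0, bs⟩, rfl⟩ := hx
        cases bs with
        | nil =>
          have hmem : mono ι X b0 [] ∈ M := by
            rw [mono_nil]
            exact Submodule.mem_sup_left (⟨b0, rfl⟩ : ι b0 ∈ LinearMap.range ι.toLinearMap)
          have : M.mkQ (mono ι X b0 []) = 0 := (Submodule.Quotient.mk_eq_zero M).mpr hmem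
          rw [this]
          exact Submodule.zero_mem _
        | cons b bs =>
          have hne : (((b :: bs).length : ℕ) : ℂ) ≠ 0 := by
            exact Nat.cast_ne_zero.mpr (Nat.succ_ne_zero _)
          have heig : M.mkQ (mono ι X b0 (b :: bs)) ∈
              Module.End.eigenspace Nbar (((b :: bs).length : ℕ) : ℂ) := by
            rw [Module.End.mem_eigenspace_iff, hNbarmk, hNmono, map_smul]
          exact Submodule.mem_iSup_of_mem _ (Submodule.mem_iSup_of_mem hne heig)
      | zero => exact Submodule.zero_mem _
      | add x y hx hy hx' hy' => rw [map_add]; exact Submodule.add_mem _ hx' hy'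
      | smul c x hx hx' => rw [map_smul]; exact Submodule.smul_mem _ c hx'
    have hx0 : M.mkQ p ∈ Module.End.eigenspace Nbar (0:ℂ) := by
      rw [Module.End.mem_eigenspace_iff, hNbarmk, zero_smul]
      exact (Submodule.Quotient.mk_eq_zero M).mpr hNpM
    have hdis := Module.End.eigenspaces_iSupIndep Nbar (0:ℂ)
    have hzero : M.mkQ p = 0 :=
      Submodule.disjoint_def.mp hdis _ hx0 (hQtop _)
    exact (Submodule.Quotient.mk_eq_zero M).mp hzero
  · -- easy direction: M ≤ ker Cop
    intro x hx
    rcases Submodule.mem_sup.mp hx with ⟨y, hy, z, hz, rfl⟩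
    obtain ⟨b, rfl⟩ := hy
    rw [LinearMap.mem_ker, map_add]
    have h1 : Cop (ι.toLinearMap b) = 0 := hCopB b
    rw [h1, hCopS z hz, add_zero]

end
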